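/- Let X = A_1 × ⋯ × A_m be a Cartesian set over F_q, let 0 ≤ d ≤ m, and let 1 ≤ r ≤ Σ_{i=0}^{d} C(m,i). Then the r-th generalized Hamming weight of the Cartesian square-free code C_{≤d}^{X,S} satisfies d_r(C_{≤d}^{X,S}) = n_1⋯n_m − max{|Δ_X(N)| : N ⊆ S_{≤d}(m), |N| = r} = min{|∇_X(N)| : N ⊆ S_{≤d}(m), |N| = r}. -/

import Mathlib

/-- Square-free exponent vectors of total degree `d` in `m` variables. -/
def Sd (m d : ℕ) : Set (Fin m → ℕ) := {a | (∀ i, a i ≤ 1) ∧ ∑ i, a i = d}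

/-- Square-free exponent vectors of total degree at most `d` in `m` variables. -/
def Sle (m d : ℕ) : Set (Fin m → ℕ) := {a | (∀ i, a i ≤ 1) ∧ ∑ i, a i ≤ d}

/-- Evaluation code over the Cartesian set `X = A 0 × ⋯ × A (m-1)`, spanned by the
evaluations of the monomials `x^a` for `a ∈ S`. -/
noncomputable def evalCodeX {F : Type*} [Field F] {m : ℕ} (A : Fin m → Finset F)
    (S : Set (Fin m → ℕ)) :
    Submodule F ({P : Fin m → F // ∀ i, P i ∈ A i} → F) :=
  Submodule.span F ((fun (a : Fin m → ℕ) (P : {P : Fin m → F // ∀ i, P i ∈ A i}) =>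
    ∏ i, P.1 i ^ a i) '' S)

open Classical in
/-- Support of a linear code. -/
noncomputable def codeSupp {F ι : Type*} [Field F] [Fintype ι]
    (C : Submodule F (ι → F)) : Finset ι :=
  Finset.univ.filter (fun i => ∃ c ∈ C, c i ≠ 0)

/-- The `r`-th generalized Hamming weight of a linear code: the minimum cardinality of the
support of an `r`-dimensional subcode. -/
noncomputable def GHW {F ι : Type*} [Field F] [Fintype ι]
    (C : Submodule F (ι → F)) (r : ℕ) : ℕ :=
  sInf {k | ∃ C' : Submodule F (ι → F),
    C' ≤ C ∧ Module.finrank F C' = r ∧ (codeSupp C').card = k}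

/-- The footprint box `B_X = {0,…,n_1−1} × ⋯ × {0,…,n_m−1}`. -/
noncomputable def BX {F : Type*} {m : ℕ} (A : Fin m → Finset F) : Finset (Fin m → ℕ) :=
  Fintype.piFinset (fun i => Finset.range (A i).card)

open Classical in
/-- The shadow `∇_X(N)`: elements of `B_X` divisible by some element of `N`. -/
noncomputable def nablaX {F : Type*} {m : ℕ} (A : Fin m → Finset F)
    (N : Set (Fin m → ℕ)) : Finset (Fin m → ℕ) :=
  (BX A).filter (fun b => ∃ a ∈ N, ∀ i, a i ≤ b i)

open Classical in
/-- The footprint `Δ_X(N) = B_X ∖ ∇_X(N)`. -/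
noncomputable def deltaX {F : Type*} {m : ℕ} (A : Fin m → Finset F)
    (N : Set (Fin m → ℕ)) : Finset (Fin m → ℕ) :=
  (BX A).filter (fun b => ¬ ∃ a ∈ N, ∀ i, a i ≤ b i)

/-- positional weight -/
def wt (M : ℕ) {m : ℕ} (δ : Fin m → ℕ) : ℕ := ∑ i, δ i * M ^ (i : ℕ)

lemma wt_add (M : ℕ) {m : ℕ} (a b : Fin m → ℕ) : wt M (a + b) = wt M a + wt M b := by
  simp [wt, add_mul, Finset.sum_add_distrib]

lemma wt_mono {M : ℕ} {m : ℕ} {a b : Fin m → ℕ} (h : ∀ i, a i ≤ b i) : wt M a ≤ wt M b :=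
  Finset.sum_le_sum (fun i _ => Nat.mul_le_mul_right _ (h i))

lemma wt_strict_mono {M : ℕ} (hM : 1 ≤ M) {m : ℕ} {a b : Fin m → ℕ}
    (h : ∀ i, a i ≤ b i) (hne : a ≠ b) : wt M a < wt M b := by
  obtain ⟨i, hi⟩ : ∃ i, a i ≠ b i := by
    by_contra hc; push_neg at hc; exact hne (funext hc)
  refine Finset.sum_lt_sum (fun j _ => Nat.mul_le_mul_right _ (h j)) ⟨i, Finset.mem_univ i, ?_⟩
  exact (Nat.mul_lt_mul_right (Nat.pow_pos hM)).mpr (lt_of_le_of_ne (h i) hi)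

lemma wt_succ (M : ℕ) {m : ℕ} (a : Fin (m+1) → ℕ) :
    wt M a = a 0 + M * wt M (fun i : Fin m => a i.succ) := by
  rw [wt, Fin.sum_univ_succ]
  simp only [Fin.val_zero, pow_zero, mul_one, wt, Finset.mul_sum]
  congr 1
  refine Finset.sum_congr rfl (fun i _ => ?_)
  rw [Fin.val_succ, pow_succ]; ring

lemma wt_inj {M : ℕ} {m : ℕ} : ∀ {a b : Fin m → ℕ}, (∀ i, a i < M) → (∀ i, b i < M) →
    wt M a = wt M b → a = b := by
  induction m with
  | zero => intro a b _ _ _; funext i; exact i.elim0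
  | succ m ih =>
    intro a b ha hb h
    rw [wt_succ, wt_succ] at h
    have hM : 0 < M := Nat.pos_of_ne_zero (by intro hz; exact absurd (ha 0) (by simp [hz]))
    have h0 : a 0 = b 0 := by
      have := congrArg (· % M) h
      simpa [Nat.add_mul_mod_self_left, Nat.mod_eq_of_lt (ha 0), Nat.mod_eq_of_lt (hb 0)] using this
    have htail : wt M (fun i : Fin m => a i.succ) = wt M (fun i : Fin m => b i.succ) := by
      have := h; rw [h0] at this
      exact Nat.eq_of_mul_eq_mul_left hM (by omega)
    have := ih (fun i => ha i.succ) (fun i => hb i.succ) htail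
    funext i
    refine Fin.cases h0 (fun j => ?_) i
    exact congrFun this j

lemma exists_N {m d r : ℕ} (hr2 : r ≤ ∑ i ∈ Finset.range (d + 1), Nat.choose m i) :
    ∃ N : Finset (Fin m → ℕ), ↑N ⊆ Sle m d ∧ N.card = r := by
  classical
  set f : Finset (Fin m) → (Fin m → ℕ) := fun s i => if i ∈ s then 1 else 0 with hf
  set Q : Finset (Finset (Fin m)) := Finset.univ.powerset.filter (fun s => s.card ≤ d) with hQ
  have hQeq : Q = (Finset.range (d + 1)).biUnion
      (fun i => Finset.powersetCard i (Finset.univ : Finset (Fin m))) := by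
    ext s
    simp only [hQ, Finset.mem_filter, Finset.mem_powerset, Finset.mem_biUnion,
      Finset.mem_range, Finset.mem_powersetCard, Nat.lt_succ_iff]
    constructor
    · rintro ⟨hsub, hcard⟩
      exact ⟨s.card, hcard, hsub, rfl⟩
    · rintro ⟨i, hi, hsub, hcard⟩
      exact ⟨hsub, hcard ▸ hi⟩
  have hQcard : Q.card = ∑ i ∈ Finset.range (d + 1), Nat.choose m i := by
    rw [hQeq, Finset.card_biUnion]
    · exact Finset.sum_congr rfl (fun i _ => by
        rw [Finset.card_powersetCard, Finset.card_univ, Fintype.card_fin])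
    · intro i hi j hj hij
      rw [Function.onFun, Finset.disjoint_left]
      intro s hsi hsj
      rw [Finset.mem_powersetCard] at hsi hsj
      exact hij (hsi.2 ▸ hsj.2)
  have hfinj : Function.Injective f := by
    intro s s' hss'
    ext i
    have hc := congrFun hss' i
    by_cases hi : i ∈ s <;> by_cases hi' : i ∈ s' <;>
      simp only [hf, hi, hi', if_pos, if_neg, if_true, if_false] at hc <;> tauto
  have hUcard : (Q.image f).card = ∑ i ∈ Finset.range (d + 1), Nat.choose m i := by
    rw [Finset.card_image_of_injective _ hfinj, hQcard]
  have hUsle : ↑(Q.image f) ⊆ Sle m d := by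
    intro a ha
    obtain ⟨s, hsQ, rfl⟩ := Finset.mem_image.mp (Finset.mem_coe.mp ha)
    rw [hQ, Finset.mem_filter] at hsQ
    have hsum : ∑ i, f s i = s.card := by
      show (∑ i, if i ∈ s then 1 else 0) = s.card
      rw [Finset.sum_ite_mem, Finset.univ_inter, Finset.sum_const, smul_eq_mul, mul_one]
    constructor
    · intro i
      show (if i ∈ s then 1 else 0) ≤ 1
      by_cases hi : i ∈ s <;> simp [hi]
    · show (∑ i, f s i) ≤ d
      rw [hsum]
      exact hsQ.2
  obtain ⟨N, hNsub, hNcard⟩ :=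
    Finset.exists_subset_card_eq (le_trans hr2 (le_of_eq hUcard.symm))
  exact ⟨N, subset_trans (Finset.coe_subset.mpr hNsub) hUsle, hNcard⟩

section Dev
variable {F : Type*} [Field F] [Fintype F] [DecidableEq F] {m : ℕ}

abbrev XX (A : Fin m → Finset F) := {P : Fin m → F // ∀ i, P i ∈ A i}

variable (A : Fin m → Finset F)
set_option linter.unusedSectionVars false

/-- evaluation of the monomial x^δ on X -/
def mV (δ : Fin m → ℕ) : XX A → F := fun P => ∏ i, P.1 i ^ δ i

lemma card_XX : Fintype.card (XX A) = ∏ i, (A i).card := by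
  have e : XX A ≃ (∀ i, ↥(A i)) :=
    { toFun := fun P i => ⟨P.1 i, P.2 i⟩
      invFun := fun f => ⟨fun i => (f i).1, fun i => (f i).2⟩
      left_inv := fun P => rfl
      right_inv := fun f => rfl }
  rw [Fintype.card_congr e, Fintype.card_pi]
  simp [Fintype.card_coe]

lemma card_BX : (BX A).card = ∏ i, (A i).card := by
  rw [BX, Fintype.card_piFinset]; simp

lemma mem_BX {β : Fin m → ℕ} : β ∈ BX A ↔ ∀ i, β i < (A i).card := by
  simp [BX, Fintype.mem_piFinset]

lemma indicator_mem_span (P₀ : XX A) :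
    (fun P : XX A => if P = P₀ then (1:F) else 0) ∈
      Submodule.span F (Set.range (fun β : ↥(BX A) => mV A β.1)) := by
  classical
  set L : Fin m → Polynomial F := fun i => Lagrange.basis (A i) id (P₀.1 i) with hL
  have hA : ∀ i, 1 ≤ (A i).card := fun i => Finset.card_pos.mpr ⟨P₀.1 i, P₀.2 i⟩
  have hdeg : ∀ i, (L i).natDegree < (A i).card := by
    intro i
    have h1 : (L i).degree = ((A i).card - 1 : ℕ) :=
      Lagrange.degree_basis (Set.injOn_id _) (P₀.2 i)
    have h2 : (L i).natDegree = (A i).card - 1 := Polynomial.natDegree_eq_of_degree_eq_some h1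
    have := hA i; omega
  have key : (fun P : XX A => if P = P₀ then (1:F) else 0)
      = ∑ β ∈ BX A, (∏ i, (L i).coeff (β i)) • mV A β := by
    funext P
    have : ∀ β ∈ BX A, ((∏ i, (L i).coeff (β i)) • mV A β) P
        = ∏ i, ((L i).coeff (β i) * P.1 i ^ (β i)) := by
      intro β _
      simp [mV, Finset.prod_mul_distrib]
    rw [Finset.sum_apply, Finset.sum_congr rfl this, BX,
      ← Finset.prod_univ_sum (fun i => Finset.range (A i).card)
        (fun i k => (L i).coeff k * P.1 i ^ k)]
    have : ∀ i, ∑ k ∈ Finset.range (A i).card, (L i).coeff k * P.1 i ^ k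
        = (L i).eval (P.1 i) := by
      intro i
      rw [Polynomial.eval_eq_sum_range' (hdeg i)]
    rw [Finset.prod_congr rfl (fun i _ => this i)]
    by_cases hP : P = P₀
    · subst hP
      simp only [if_pos rfl]
      refine (Finset.prod_eq_one (fun i _ => ?_)).symm
      exact Lagrange.eval_basis_self (Set.injOn_id _) (P.2 i)
    · rw [if_neg hP]
      obtain ⟨i, hi⟩ : ∃ i, P.1 i ≠ P₀.1 i := by
        by_contra hc; push_neg at hc
        exact hP (Subtype.ext (funext hc))
      refine (Finset.prod_eq_zero (Finset.mem_univ i) ?_).symm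
      exact Lagrange.eval_basis_of_ne (s := A i) (v := id) (i := P₀.1 i) (j := P.1 i) (Ne.symm hi) (P.2 i)
  rw [key]
  refine Submodule.sum_mem _ (fun β hβ => Submodule.smul_mem _ _ ?_)
  exact Submodule.subset_span ⟨⟨β, hβ⟩, rfl⟩

lemma span_mV_top :
    ⊤ ≤ Submodule.span F (Set.range (fun β : ↥(BX A) => mV A β.1)) := by
  intro f _
  classical
  have : f = ∑ P₀ : XX A, f P₀ • (fun P : XX A => if P = P₀ then (1:F) else 0) := by
    funext P
    simp [Finset.sum_apply, mul_ite]
  rw [this]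
  exact Submodule.sum_mem _ (fun P₀ _ =>
    Submodule.smul_mem _ _ (indicator_mem_span A P₀))

noncomputable def bb : Module.Basis ↥(BX A) F (XX A → F) :=
  basisOfTopLeSpanOfCardEqFinrank (fun β : ↥(BX A) => mV A β.1) (span_mV_top A)
    (by rw [Fintype.card_coe, card_BX, Module.finrank_pi, card_XX])

@[simp] lemma bb_apply (β : ↥(BX A)) : bb A β = mV A β.1 := by
  simp [bb]


/-- base for positional weights -/
def MM (F : Type*) [Fintype F] : ℕ := Fintype.card F + 1

lemma bx_lt_MM {β : Fin m → ℕ} (hβ : β ∈ BX A) : ∀ i, β i < MM F := fun i =>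
  lt_of_lt_of_le ((mem_BX A).mp hβ i) (le_trans (Finset.card_le_univ _) (Nat.le_succ _))

lemma wt_inj_BX {β γ : Fin m → ℕ} (hβ : β ∈ BX A) (hγ : γ ∈ BX A)
    (h : wt (MM F) β = wt (MM F) γ) : β = γ :=
  wt_inj (bx_lt_MM A hβ) (bx_lt_MM A hγ) h

lemma repr_supp_nonempty {c : XX A → F} (hc : c ≠ 0) :
    (((bb A).repr c).support).Nonempty := by
  rw [Finsupp.support_nonempty_iff]
  exact fun h => hc ((map_eq_zero_iff _ (bb A).repr.injective).mp h)

noncomputable def lead {c : XX A → F} (hc : c ≠ 0) : ↥(BX A) :=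
  Classical.choose (Finset.exists_max_image (((bb A).repr c).support)
    (fun β => wt (MM F) β.1) (repr_supp_nonempty A hc))

lemma lead_mem {c : XX A → F} (hc : c ≠ 0) :
    lead A hc ∈ ((bb A).repr c).support :=
  (Classical.choose_spec (Finset.exists_max_image (((bb A).repr c).support)
    (fun β => wt (MM F) β.1) (repr_supp_nonempty A hc))).1

lemma lead_max {c : XX A → F} (hc : c ≠ 0) :
    ∀ β ∈ ((bb A).repr c).support, wt (MM F) β.1 ≤ wt (MM F) (lead A hc).1 :=
  (Classical.choose_spec (Finset.exists_max_image (((bb A).repr c).support)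
    (fun β => wt (MM F) β.1) (repr_supp_nonempty A hc))).2

lemma lead_coeff_ne {c : XX A → F} (hc : c ≠ 0) :
    (bb A).repr c (lead A hc) ≠ 0 :=
  Finsupp.mem_support_iff.mp (lead_mem A hc)

lemma lead_eq {c : XX A → F} (hc : c ≠ 0) {β₀ : ↥(BX A)}
    (h1 : β₀ ∈ ((bb A).repr c).support)
    (h2 : ∀ β ∈ ((bb A).repr c).support, wt (MM F) β.1 ≤ wt (MM F) β₀.1) :
    lead A hc = β₀ := by
  refine Subtype.ext (wt_inj_BX A (lead A hc).2 β₀.2 ?_)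
  exact le_antisymm (h2 _ (lead_mem A hc)) (lead_max A hc _ h1)

lemma li_of_lead {ι : Type*} [Fintype ι] (c : ι → (XX A → F)) (hc : ∀ j, c j ≠ 0)
    (hinj : ∀ j k, lead A (hc j) = lead A (hc k) → j = k) :
    LinearIndependent F c := by
  rw [Fintype.linearIndependent_iff]
  intro g hg
  by_contra hne
  push_neg at hne
  obtain ⟨j', hj'⟩ := hne
  classical
  set T := Finset.univ.filter (fun j => g j ≠ 0) with hTdef
  have hT : T.Nonempty := ⟨j', by simp [hTdef, hj']⟩
  obtain ⟨j₀, hj₀T, hmax⟩ :=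
    Finset.exists_max_image T (fun j => wt (MM F) (lead A (hc j)).1) hT
  have hg0 : g j₀ ≠ 0 := (Finset.mem_filter.mp hj₀T).2
  have hr : (∑ j, g j • ((bb A).repr (c j))) = 0 := by
    have : ∀ j ∈ Finset.univ, g j • (bb A).repr (c j) = (bb A).repr (g j • c j) :=
      fun j _ => ((bb A).repr.map_smul (g j) (c j)).symm
    rw [Finset.sum_congr rfl this, ← map_sum, hg, map_zero]
  have hev : (∑ j, g j * ((bb A).repr (c j)) (lead A (hc j₀))) = 0 := by
    have := congrArg (fun s => s (lead A (hc j₀))) hr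
    simpa [Finsupp.finset_sum_apply] using this
  have hzero : ∀ j ∈ Finset.univ, j ≠ j₀ →
      g j * ((bb A).repr (c j)) (lead A (hc j₀)) = 0 := by
    intro j _ hjne
    by_cases hgj : g j = 0
    · simp [hgj]
    have hjT : j ∈ T := by simp [hTdef, hgj]
    by_cases hco : ((bb A).repr (c j)) (lead A (hc j₀)) = 0
    · simp [hco]
    exfalso
    have hmem : lead A (hc j₀) ∈ ((bb A).repr (c j)).support := Finsupp.mem_support_iff.mpr hco
    have h1 : wt (MM F) (lead A (hc j₀)).1 ≤ wt (MM F) (lead A (hc j)).1 := lead_max A (hc j) _ hmem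
    have h2 : wt (MM F) (lead A (hc j)).1 ≤ wt (MM F) (lead A (hc j₀)).1 := hmax j hjT
    have : lead A (hc j) = lead A (hc j₀) :=
      Subtype.ext (wt_inj_BX A (lead A (hc j)).2 (lead A (hc j₀)).2 (le_antisymm h2 h1))
    exact hjne (hinj j j₀ this)
  rw [Finset.sum_eq_single_of_mem j₀ (Finset.mem_univ j₀) hzero] at hev
  exact hg0 (by
    rcases mul_eq_zero.mp hev with h | h
    · exact h
    · exact absurd h (lead_coeff_ne A (hc j₀)))


lemma repr_single_of_BX (δ : Fin m → ℕ) (hδ : δ ∈ BX A) :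
    (bb A).repr (mV A δ) = Finsupp.single ⟨δ, hδ⟩ 1 := by
  have h : mV A δ = bb A ⟨δ, hδ⟩ := (bb_apply A ⟨δ, hδ⟩).symm
  rw [h, Module.Basis.repr_self]

lemma repr_mV_wt_le : ∀ (n : ℕ) (δ : Fin m → ℕ), wt (MM F) δ = n →
    ∀ β ∈ ((bb A).repr (mV A δ)).support, wt (MM F) β.1 ≤ wt (MM F) δ := by
  intro n
  induction n using Nat.strong_induction_on with
  | _ n ih =>
  intro δ hn β hβ
  by_cases hδ : δ ∈ BX A
  · rw [repr_single_of_BX A δ hδ] at hβ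
    have := Finsupp.support_single_subset hβ
    rw [Finset.mem_singleton] at this
    rw [this]
  · obtain ⟨i, hi⟩ : ∃ i, (A i).card ≤ δ i := by
      by_contra hcon; push_neg at hcon
      exact hδ ((mem_BX A).mpr hcon)
    classical
    set p : Polynomial F := ∏ e ∈ A i, (Polynomial.X - Polynomial.C e) with hp
    have hmon : ∀ e ∈ A i, (Polynomial.X - Polynomial.C e).Monic :=
      fun e _ => Polynomial.monic_X_sub_C e
    have hmonic : p.Monic := Polynomial.monic_prod_of_monic _ _ hmon
    have hdegp : p.natDegree = (A i).card := by
      rw [hp, Polynomial.natDegree_prod_of_monic _ _ hmon]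
      simp [Polynomial.natDegree_X_sub_C]
    have hroot : ∀ x ∈ A i, p.eval x = 0 := fun x hx => by
      rw [hp, Polynomial.eval_prod]
      exact Finset.prod_eq_zero hx (by simp)
    have hpow : ∀ x ∈ A i, x ^ (A i).card
        = ∑ k ∈ Finset.range (A i).card, (-(p.coeff k)) * x ^ k := by
      intro x hx
      have h1 : (0:F) = (∑ k ∈ Finset.range (A i).card, p.coeff k * x ^ k)
          + x ^ (A i).card := by
        rw [← hroot x hx, Polynomial.eval_eq_sum_range, hdegp, Finset.sum_range_succ]
        congr 1
        rw [← hdegp, hmonic.coeff_natDegree, one_mul, hdegp]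
      have h2 : x ^ (A i).card = -(∑ k ∈ Finset.range (A i).card, p.coeff k * x ^ k) := by
        rw [eq_neg_iff_add_eq_zero]
        linear_combination -h1
      rw [h2, ← Finset.sum_neg_distrib]
      exact (Finset.sum_congr rfl (fun k _ => by ring))
    have hdecomp : mV A δ = ∑ k ∈ Finset.range (A i).card,
        (-(p.coeff k)) • mV A (Function.update δ i (δ i - (A i).card + k)) := by
      funext P
      rw [Finset.sum_apply]
      have hsplit : ∀ (e : ℕ), mV A (Function.update δ i e) P
          = P.1 i ^ e * ∏ j ∈ Finset.univ.erase i, P.1 j ^ δ j := by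
        intro e
        rw [mV, ← Finset.mul_prod_erase Finset.univ _ (Finset.mem_univ i),
          Function.update_self]
        congr 1
        refine Finset.prod_congr rfl (fun j hj => ?_)
        rw [Function.update_of_ne (Finset.ne_of_mem_erase hj)]
      have hxi : P.1 i ^ δ i = ∑ k ∈ Finset.range (A i).card,
          (-(p.coeff k)) * P.1 i ^ (δ i - (A i).card + k) := by
        have hsp : P.1 i ^ δ i = P.1 i ^ (δ i - (A i).card) * P.1 i ^ (A i).card := by
          rw [← pow_add]; congr 1; omega
        rw [hsp, hpow _ (P.2 i), Finset.mul_sum]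
        exact Finset.sum_congr rfl (fun k _ => by rw [pow_add]; ring)
      rw [mV, ← Finset.mul_prod_erase Finset.univ _ (Finset.mem_univ i), hxi,
        Finset.sum_mul]
      exact Finset.sum_congr rfl (fun k _ => by
        rw [Pi.smul_apply, smul_eq_mul, hsplit]; ring)
    have hrepr : (bb A).repr (mV A δ) = ∑ k ∈ Finset.range (A i).card,
        (-(p.coeff k)) • (bb A).repr (mV A (Function.update δ i (δ i - (A i).card + k))) := by
      rw [hdecomp, map_sum]
      exact Finset.sum_congr rfl (fun k _ => by rw [map_smul])
    rw [hrepr] at hβ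
    have hsub := Finsupp.support_finset_sum hβ
    rw [Finset.mem_biUnion] at hsub
    obtain ⟨k, hk, hβk⟩ := hsub
    rw [Finset.mem_range] at hk
    have hβk' : β ∈ ((bb A).repr (mV A (Function.update δ i (δ i - (A i).card + k)))).support :=
      Finsupp.support_smul hβk
    have hlt : wt (MM F) (Function.update δ i (δ i - (A i).card + k)) < n := by
      rw [← hn]
      refine wt_strict_mono (Nat.le_add_left 1 _) (fun j => ?_) ?_
      · by_cases hji : j = i
        · subst hji; rw [Function.update_self]; omega
        · rw [Function.update_of_ne hji]
      · intro hcon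
        have := congrFun hcon i
        rw [Function.update_self] at this
        omega
    have := ih _ hlt (Function.update δ i (δ i - (A i).card + k)) rfl β hβk'
    omega

lemma mul_mV (γ δ : Fin m → ℕ) :
    (fun P => mV A γ P * mV A δ P) = mV A (γ + δ) := by
  funext P
  rw [mV, mV, mV, ← Finset.prod_mul_distrib]
  exact Finset.prod_congr rfl (fun j _ => by rw [Pi.add_apply, pow_add])

lemma lead_mV_mul {c : XX A → F} (hc : c ≠ 0) {β : Fin m → ℕ} (hβ : β ∈ BX A)
    (hle : ∀ i, (lead A hc).1 i ≤ β i) :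
    ∃ hu : (fun P => mV A (β - (lead A hc).1) P * c P) ≠ 0,
      lead A hu = ⟨β, hβ⟩ := by
  classical
  set a := lead A hc with ha
  set γ : Fin m → ℕ := β - a.1 with hγ
  set u : XX A → F := fun P => mV A γ P * c P with hu
  have hγa : γ + a.1 = β := by
    funext i
    have := hle i
    simp only [hγ, Pi.add_apply, Pi.sub_apply]
    omega
  have hu_eq : u = ∑ b : ↥(BX A), ((bb A).repr c b) • mV A (γ + b.1) := by
    funext P
    rw [Finset.sum_apply]
    have h1 : c P = ∑ b : ↥(BX A), ((bb A).repr c b) * (bb A b) P := by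
      conv_lhs => rw [← Module.Basis.sum_repr (bb A) c]
      rw [Finset.sum_apply]
      exact Finset.sum_congr rfl (fun b _ => rfl)
    show mV A γ P * c P = _
    rw [h1, Finset.mul_sum]
    refine Finset.sum_congr rfl (fun b _ => ?_)
    have h2 := congrFun (mul_mV A γ b.1) P
    simp only [bb_apply, Pi.smul_apply, smul_eq_mul, ← h2]
    ring
  have hrepr : (bb A).repr u = ∑ b : ↥(BX A),
      ((bb A).repr c b) • (bb A).repr (mV A (γ + b.1)) := by
    rw [hu_eq, map_sum]
    exact Finset.sum_congr rfl (fun b _ => by rw [map_smul])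
  have hwt_lt : ∀ b : ↥(BX A), b ∈ ((bb A).repr c).support → b ≠ a →
      wt (MM F) b.1 < wt (MM F) a.1 := by
    intro b hb hbne
    have h1 := lead_max A hc b hb
    rcases lt_or_eq_of_le h1 with h | h
    · exact h
    · exact absurd (Subtype.ext (wt_inj_BX A b.2 a.2 h)) hbne
  have hcoeff : (bb A).repr u ⟨β, hβ⟩ = (bb A).repr c a := by
    rw [hrepr]
    rw [Finsupp.finset_sum_apply]
    rw [Finset.sum_eq_single_of_mem a (Finset.mem_univ a)]
    · rw [Finsupp.smul_apply, hγa, repr_single_of_BX A β hβ,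
        Finsupp.single_eq_same, smul_eq_mul, mul_one]
    · intro b _ hbne
      rw [Finsupp.smul_apply, smul_eq_mul]
      by_cases hcb : (bb A).repr c b = 0
      · rw [hcb, zero_mul]
      have hb : b ∈ ((bb A).repr c).support := Finsupp.mem_support_iff.mpr hcb
      have hblt := hwt_lt b hb hbne
      have hz : (bb A).repr (mV A (γ + b.1)) ⟨β, hβ⟩ = 0 := by
        by_contra hnz
        have hmem : (⟨β, hβ⟩ : ↥(BX A)) ∈ ((bb A).repr (mV A (γ + b.1))).support :=
          Finsupp.mem_support_iff.mpr hnz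
        have := repr_mV_wt_le A _ (γ + b.1) rfl _ hmem
        have hco : ((⟨β, hβ⟩ : ↥(BX A)) : Fin m → ℕ) = β := rfl
        rw [wt_add, hco] at this
        have hβw : wt (MM F) β = wt (MM F) γ + wt (MM F) a.1 := by
          rw [← hγa, wt_add]
        omega
      rw [hz, mul_zero]
  have hune : u ≠ 0 := by
    intro h0
    rw [h0, map_zero] at hcoeff
    exact lead_coeff_ne A hc (by rw [← hcoeff]; rfl)
  refine ⟨hune, ?_⟩
  refine lead_eq A hune ?_ ?_
  · exact Finsupp.mem_support_iff.mpr (by rw [hcoeff]; exact lead_coeff_ne A hc)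
  · intro β' hβ'
    rw [hrepr] at hβ'
    obtain ⟨b, _, hβ'b⟩ := Finset.mem_biUnion.mp (Finsupp.support_finset_sum hβ')
    have hβ'b' : β' ∈ ((bb A).repr (mV A (γ + b.1))).support := Finsupp.support_smul hβ'b
    by_cases hcb : (bb A).repr c b = 0
    · rw [hcb, zero_smul] at hβ'b
      simp at hβ'b
    have hb : b ∈ ((bb A).repr c).support := Finsupp.mem_support_iff.mpr hcb
    have h1 := repr_mV_wt_le A _ (γ + b.1) rfl _ hβ'b'
    have h2 := lead_max A hc b hb
    rw [← ha] at h2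
    rw [wt_add] at h1
    have hβw : wt (MM F) β = wt (MM F) γ + wt (MM F) a.1 := by
      rw [← hγa, wt_add]
    show wt (MM F) β'.1 ≤ wt (MM F) β
    omega


lemma sle_mem_BX (hcard : ∀ i, 2 ≤ (A i).card) {d : ℕ} {a : Fin m → ℕ}
    (ha : a ∈ Sle m d) : a ∈ BX A :=
  (mem_BX A).mpr (fun i => lt_of_le_of_lt (ha.1 i) (hcard i))

lemma repr_code_supp (hcard : ∀ i, 2 ≤ (A i).card) {d : ℕ} {c : XX A → F}
    (hc : c ∈ evalCodeX A (Sle m d)) :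
    ∀ β ∈ ((bb A).repr c).support, β.1 ∈ Sle m d := by
  classical
  set T : Set ↥(BX A) := {β | β.1 ∈ Sle m d} with hT
  have hW : evalCodeX A (Sle m d) ≤
      (Finsupp.supported F F T).comap ((bb A).repr.toLinearMap) := by
    rw [evalCodeX, Submodule.span_le]
    rintro _ ⟨a, haS, rfl⟩
    have heq : (fun P : XX A => ∏ i, P.1 i ^ a i) = mV A a := rfl
    simp only [Set.mem_preimage, SetLike.mem_coe, Submodule.mem_comap,
      LinearEquiv.coe_coe]
    rw [heq, repr_single_of_BX A a (sle_mem_BX A hcard haS)]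
    exact Finsupp.single_mem_supported F 1 haS
  have hmem := hW hc
  simp only [Submodule.mem_comap, LinearEquiv.coe_coe, Finsupp.mem_supported] at hmem
  intro β hβ
  exact hmem hβ

section UB
variable (hcard : ∀ i, 2 ≤ (A i).card)

/-- base points: element of `A i` with index 0 -/
noncomputable def tpt (i : Fin m) : F :=
  ((A i).equivFin.symm ⟨0, by have := hcard i; omega⟩ : ↥(A i)).1

lemma tpt_mem (i : Fin m) : tpt A hcard i ∈ A i :=
  ((A i).equivFin.symm ⟨0, by have := hcard i; omega⟩).2

/-- the codeword attached to a squarefree exponent -/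
noncomputable def cfn (a : Fin m → ℕ) : XX A → F :=
  fun P => ∏ i, (P.1 i - tpt A hcard i) ^ a i

lemma cfn_eq_sum {d : ℕ} {a : Fin m → ℕ} (ha : a ∈ Sle m d) :
    cfn A hcard a = ∑ T ∈ (Finset.univ : Finset (Fin m)).powerset,
      (∏ i ∈ Finset.univ \ T, (if a i = 1 then -(tpt A hcard i) else 0)) •
        mV A (fun i => if i ∈ T then a i else 0) := by
  classical
  funext P
  rw [Finset.sum_apply]
  have h1 : cfn A hcard a P
      = ∏ i, (P.1 i ^ a i + (if a i = 1 then -(tpt A hcard i) else 0)) := by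
    rw [cfn]
    refine Finset.prod_congr rfl (fun i _ => ?_)
    have := ha.1 i
    interval_cases h : a i
    · simp
    · simp [pow_one]
      ring
  rw [h1, Finset.prod_add]
  refine Finset.sum_congr rfl (fun T hT => ?_)
  rw [Pi.smul_apply, smul_eq_mul]
  have h2 : mV A (fun i => if i ∈ T then a i else 0) P = ∏ i ∈ T, P.1 i ^ a i := by
    rw [mV, ← Finset.prod_mul_prod_compl T]
    have hc1 : ∏ i ∈ T, P.1 i ^ (if i ∈ T then a i else 0) = ∏ i ∈ T, P.1 i ^ a i :=
      Finset.prod_congr rfl (fun i hi => by rw [if_pos hi])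
    have hc2 : ∏ i ∈ Tᶜ, P.1 i ^ (if i ∈ T then a i else 0) = 1 := by
      refine Finset.prod_eq_one (fun i hi => ?_)
      rw [if_neg (Finset.mem_compl.mp hi), pow_zero]
    rw [hc1, hc2, mul_one]
  rw [h2]
  ring

lemma cfn_mem_code {d : ℕ} {a : Fin m → ℕ} (ha : a ∈ Sle m d) :
    cfn A hcard a ∈ evalCodeX A (Sle m d) := by
  rw [cfn_eq_sum A hcard ha]
  refine Submodule.sum_mem _ (fun T _ => Submodule.smul_mem _ _ ?_)
  refine Submodule.subset_span ⟨fun i => if i ∈ T then a i else 0, ?_, rfl⟩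
  constructor
  · intro i
    show (if i ∈ T then a i else 0) ≤ 1
    have := ha.1 i
    by_cases hi : i ∈ T
    · rw [if_pos hi]; omega
    · rw [if_neg hi]; omega
  · refine le_trans (Finset.sum_le_sum (fun i _ => ?_)) ha.2
    show (if i ∈ T then a i else 0) ≤ a i
    by_cases hi : i ∈ T
    · rw [if_pos hi]
    · rw [if_neg hi]; omega

include hcard in
lemma sleT_mem_BX {d : ℕ} {a : Fin m → ℕ} (ha : a ∈ Sle m d) (T : Finset (Fin m)) :
    (fun i => if i ∈ T then a i else 0) ∈ BX A := by
  refine (mem_BX A).mpr (fun i => ?_)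
  have h1 := ha.1 i
  have h2 := hcard i
  show (if i ∈ T then a i else 0) < (A i).card
  by_cases hi : i ∈ T
  · rw [if_pos hi]; omega
  · rw [if_neg hi]; omega

lemma cfn_repr_coeff {d : ℕ} {a : Fin m → ℕ} (ha : a ∈ Sle m d) :
    (bb A).repr (cfn A hcard a) ⟨a, sle_mem_BX A hcard ha⟩ = 1 := by
  classical
  rw [cfn_eq_sum A hcard ha, map_sum]
  have hrw : ∀ T ∈ (Finset.univ : Finset (Fin m)).powerset,
      (bb A).repr ((∏ i ∈ Finset.univ \ T, (if a i = 1 then -(tpt A hcard i) else 0)) •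
        mV A (fun i => if i ∈ T then a i else 0))
      = (∏ i ∈ Finset.univ \ T, (if a i = 1 then -(tpt A hcard i) else 0)) •
        Finsupp.single ⟨fun i => if i ∈ T then a i else 0, sleT_mem_BX A hcard ha T⟩ 1 := by
    intro T _
    rw [map_smul, repr_single_of_BX A _ (sleT_mem_BX A hcard ha T)]
  rw [Finset.sum_congr rfl hrw, Finsupp.finset_sum_apply]
  rw [Finset.sum_eq_single_of_mem Finset.univ (Finset.mem_powerset.mpr (le_refl _))]
  · have huniv : (fun i => if i ∈ (Finset.univ : Finset (Fin m)) then a i else 0) = a := by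
      funext i; rw [if_pos (Finset.mem_univ i)]
    rw [Finsupp.smul_apply]
    rw [Finset.sdiff_self, Finset.prod_empty]
    have : (⟨fun i => if i ∈ (Finset.univ : Finset (Fin m)) then a i else 0,
        sleT_mem_BX A hcard ha Finset.univ⟩ : ↥(BX A)) = ⟨a, sle_mem_BX A hcard ha⟩ :=
      Subtype.ext huniv
    rw [this, Finsupp.single_eq_same, smul_eq_mul, one_mul]
  · intro T _ hTne
    rw [Finsupp.smul_apply, smul_eq_mul]
    by_cases heq : (⟨fun i => if i ∈ T then a i else 0, sleT_mem_BX A hcard ha T⟩ : ↥(BX A))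
        = ⟨a, sle_mem_BX A hcard ha⟩
    · obtain ⟨i, hiT⟩ : ∃ i, i ∉ T := by
        by_contra hcon; push_neg at hcon
        exact hTne (Finset.eq_univ_iff_forall.mpr hcon)
      have hai : a i = 0 := by
        have := congrFun (Subtype.mk_eq_mk.mp heq) i
        rw [if_neg hiT] at this
        omega
      have : ∏ i ∈ Finset.univ \ T, (if a i = 1 then -(tpt A hcard i) else 0) = 0 := by
        refine Finset.prod_eq_zero (Finset.mem_sdiff.mpr ⟨Finset.mem_univ i, hiT⟩) ?_
        rw [hai]; simp
      rw [this, zero_mul]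
    · rw [Finsupp.single_eq_of_ne (Ne.symm heq), mul_zero]

lemma cfn_ne_zero {d : ℕ} {a : Fin m → ℕ} (ha : a ∈ Sle m d) :
    cfn A hcard a ≠ 0 := by
  intro h0
  have := cfn_repr_coeff A hcard ha
  rw [h0, map_zero] at this
  simp at this

lemma cfn_lead {d : ℕ} {a : Fin m → ℕ} (ha : a ∈ Sle m d) :
    lead A (cfn_ne_zero A hcard ha) = ⟨a, sle_mem_BX A hcard ha⟩ := by
  classical
  refine lead_eq A _ ?_ ?_
  · exact Finsupp.mem_support_iff.mpr (by rw [cfn_repr_coeff A hcard ha]; exact one_ne_zero)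
  · intro β hβ
    rw [cfn_eq_sum A hcard ha] at hβ
    rw [map_sum] at hβ
    obtain ⟨T, _, hβT⟩ := Finset.mem_biUnion.mp (Finsupp.support_finset_sum hβ)
    rw [map_smul] at hβT
    have hβT' := Finsupp.support_smul hβT
    rw [repr_single_of_BX A _ (sleT_mem_BX A hcard ha T)] at hβT'
    have := Finsupp.support_single_subset hβT'
    rw [Finset.mem_singleton] at this
    rw [this]
    refine wt_mono (fun i => ?_)
    show (if i ∈ T then a i else 0) ≤ a i
    by_cases hi : i ∈ T <;> simp [hi]


noncomputable def idxOf (P : XX A) (i : Fin m) : ℕ :=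
  ((A i).equivFin ⟨P.1 i, P.2 i⟩ : Fin _).1

lemma idxOf_mem_BX (P : XX A) : idxOf A P ∈ BX A :=
  (mem_BX A).mpr (fun i => ((A i).equivFin ⟨P.1 i, P.2 i⟩).2)

lemma idxOf_inj : Function.Injective (idxOf A) := by
  intro P Q h
  refine Subtype.ext (funext (fun i => ?_))
  have h1 := congrFun h i
  have h2 : (A i).equivFin ⟨P.1 i, P.2 i⟩ = (A i).equivFin ⟨Q.1 i, Q.2 i⟩ := Fin.ext h1
  have h3 := (A i).equivFin.injective h2
  exact congrArg Subtype.val h3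

include hcard in
lemma idxOf_pos {P : XX A} {i : Fin m} (h : P.1 i ≠ tpt A hcard i) :
    1 ≤ idxOf A P i := by
  by_contra hcon
  push_neg at hcon
  have h0 : idxOf A P i = 0 := by omega
  apply h
  have h1 : (A i).equivFin ⟨P.1 i, P.2 i⟩
      = ⟨0, by have := hcard i; omega⟩ := Fin.ext h0
  have h2 := congrArg (A i).equivFin.symm h1
  rw [Equiv.symm_apply_apply] at h2
  rw [tpt]
  exact congrArg Subtype.val h2

include hcard in
lemma ub_exists {d : ℕ} (N : Finset (Fin m → ℕ)) (hN : ↑N ⊆ Sle m d) :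
    ∃ C' : Submodule F (XX A → F), C' ≤ evalCodeX A (Sle m d) ∧
      Module.finrank F C' = N.card ∧ (codeSupp C').card ≤ (nablaX A ↑N).card := by
  classical
  have hNa : ∀ a : ↥N, a.1 ∈ Sle m d := fun a => hN a.2
  set u : ↥N → (XX A → F) := fun a => cfn A hcard a.1 with hu
  have hune : ∀ a : ↥N, u a ≠ 0 := fun a => cfn_ne_zero A hcard (hNa a)
  have hlead : ∀ a, lead A (hune a) = ⟨a.1, sle_mem_BX A hcard (hNa a)⟩ :=
    fun a => cfn_lead A hcard (hNa a)
  have hli : LinearIndependent F u := li_of_lead A u hune (fun a b hab => by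
    rw [hlead a, hlead b] at hab
    exact Subtype.ext (Subtype.mk_eq_mk.mp hab))
  refine ⟨Submodule.span F (Set.range u), ?_, ?_, ?_⟩
  · rw [Submodule.span_le]
    rintro _ ⟨a, rfl⟩
    exact cfn_mem_code A hcard (hNa a)
  · rw [finrank_span_eq_card hli, Fintype.card_coe]
  · refine Finset.card_le_card_of_injOn (fun P => idxOf A P) ?_ ?_
    · intro P hP
      simp only [codeSupp, Finset.mem_coe, Finset.mem_filter] at hP
      obtain ⟨-, c, hcC, hcP⟩ := hP
      have key : ∀ c', c' ∈ Submodule.span F (Set.range u) → c' P ≠ 0 →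
          ∃ a ∈ N, ∀ i, a i ≤ idxOf A P i := by
        intro c' hc'
        refine Submodule.span_induction
          (p := fun x _ => x P ≠ 0 → ∃ a ∈ N, ∀ i, a i ≤ idxOf A P i)
          ?_ ?_ ?_ ?_ hc'
        · rintro _ ⟨a, rfl⟩ hne
          refine ⟨a.1, a.2, fun i => ?_⟩
          have hne' : ∏ j, (P.1 j - tpt A hcard j) ^ (a.1 j) ≠ 0 := hne
          have hfac := (Finset.prod_ne_zero_iff.mp hne') i (Finset.mem_univ i)
          have hai := (hNa a).1 i
          rcases Nat.le_one_iff_eq_zero_or_eq_one.mp hai with h0 | h1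
          · rw [h0]; omega
          · rw [h1]
            rw [h1, pow_one] at hfac
            exact idxOf_pos A hcard (sub_ne_zero.mp hfac)
        · intro hne
          simp at hne
        · intro x y hx hy ihx ihy hne
          by_cases hxP : x P = 0
          · refine ihy (fun h => hne ?_)
            rw [Pi.add_apply, hxP, h, add_zero]
          · exact ihx hxP
        · intro r x hx ihx hne
          refine ihx (fun h => hne ?_)
          rw [Pi.smul_apply, h, smul_zero]
      obtain ⟨a, haN, hale⟩ := key c hcC hcP
      simp only [nablaX, Finset.mem_coe, Finset.mem_filter]
      exact ⟨idxOf_mem_BX A P, a, Finset.mem_coe.mpr haN, hale⟩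
    · exact fun P _ Q _ h => idxOf_inj A h

end UB


lemma lb_exists (hcard : ∀ i, 2 ≤ (A i).card) {d : ℕ} (C' : Submodule F (XX A → F))
    (hC : C' ≤ evalCodeX A (Sle m d)) :
    ∃ N : Finset (Fin m → ℕ), ↑N ⊆ Sle m d ∧ N.card = Module.finrank F C' ∧
      (nablaX A ↑N).card ≤ (codeSupp C').card := by
  classical
  set pS : ↥(BX A) → Prop :=
    fun β => ∃ c, ∃ hcm : c ∈ C' ∧ c ≠ 0, lead A hcm.2 = β with hpS
  set S : Finset ↥(BX A) := Finset.univ.filter pS with hS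
  have step1 : Module.finrank F ↥C' ≤ S.card := by
    set φ : ↥C' →ₗ[F] (↥S → F) :=
      { toFun := fun c β => (bb A).repr c.1 β.1
        map_add' := fun x y => by
          funext β
          simp [Submodule.coe_add, map_add]
        map_smul' := fun r x => by
          funext β
          simp [Submodule.coe_smul, map_smul] } with hφ
    have hinj : Function.Injective φ := by
      rw [← LinearMap.ker_eq_bot, LinearMap.ker_eq_bot']
      intro c hc0
      by_contra hne
      have hc1 : c.1 ≠ 0 := fun h => hne (Subtype.ext h)
      have hmemS : lead A hc1 ∈ S := by
        rw [hS, Finset.mem_filter]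
        exact ⟨Finset.mem_univ _, c.1, ⟨c.2, hc1⟩, rfl⟩
      have := congrFun hc0 ⟨lead A hc1, hmemS⟩
      exact lead_coeff_ne A hc1 this
    have := LinearMap.finrank_le_finrank_of_injective hinj
    rwa [Module.finrank_pi, Fintype.card_coe] at this
  obtain ⟨S', hS'sub, hS'card⟩ := Finset.exists_subset_card_eq step1
  set N : Finset (Fin m → ℕ) := S'.image (fun β => β.1) with hN
  have hNcard : N.card = Module.finrank F ↥C' := by
    rw [hN, Finset.card_image_of_injective _ Subtype.val_injective, hS'card]
  have hNsle : ↑N ⊆ Sle m d := by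
    intro b hb
    obtain ⟨γ, hγS', hγb⟩ := Finset.mem_image.mp (Finset.mem_coe.mp hb)
    have hγS := hS'sub hγS'
    rw [hS, Finset.mem_filter] at hγS
    obtain ⟨c, hcm, hlead⟩ := hγS.2
    rw [← hγb, ← hlead]
    exact repr_code_supp A hcard (hC hcm.1) _ (lead_mem A hcm.2)
  refine ⟨N, hNsle, hNcard, ?_⟩
  have hβBX : ∀ β : ↥(nablaX A ↑N), β.1 ∈ BX A := by
    intro β
    have h := β.2
    simp only [nablaX, Finset.mem_filter] at h
    exact h.1
  have hex : ∀ β : ↥(nablaX A ↑N), ∃ c, ∃ h : (c ∈ C' ∧ c ≠ 0),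
      (∀ i, (lead A h.2).1 i ≤ β.1 i) := by
    intro β
    have hβ := β.2
    simp only [nablaX, Finset.mem_filter] at hβ
    obtain ⟨hBX, a, haN, hale⟩ := hβ
    obtain ⟨γ, hγS', hγa⟩ := Finset.mem_image.mp (Finset.mem_coe.mp haN)
    have hγS := hS'sub hγS'
    rw [hS, Finset.mem_filter] at hγS
    obtain ⟨c, hcm, hlead⟩ := hγS.2
    refine ⟨c, hcm, fun i => ?_⟩
    rw [hlead, hγa]
    exact hale i
  choose cw hcw hle using hex
  set v : ↥(nablaX A ↑N) → (XX A → F) :=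
    fun β => fun P => mV A (β.1 - (lead A (hcw β).2).1) P * cw β P with hv
  have hspec : ∀ β, ∃ hvne : v β ≠ 0, lead A hvne = ⟨β.1, hβBX β⟩ :=
    fun β => lead_mV_mul A (hcw β).2 (hβBX β) (hle β)
  have hvne : ∀ β, v β ≠ 0 := fun β => (hspec β).choose
  have hvlead : ∀ β, lead A (hvne β) = ⟨β.1, hβBX β⟩ := fun β => (hspec β).choose_spec
  have hli : LinearIndependent F v := by
    refine li_of_lead A v hvne (fun β β' hββ' => ?_)
    rw [hvlead β, hvlead β'] at hββ'
    exact Subtype.ext (Subtype.mk_eq_mk.mp hββ')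
  set ψ : (XX A → F) →ₗ[F] (↥(codeSupp C') → F) :=
    LinearMap.funLeft F F (fun x : ↥(codeSupp C') => (x.1 : XX A)) with hψ
  have hliψ : LinearIndependent F (fun β => ψ (v β)) := by
    rw [Fintype.linearIndependent_iff]
    intro g hg
    have hvsum : (∑ β, g β • v β) = 0 := by
      funext P
      by_cases hP : P ∈ codeSupp C'
      · have h1 := congrFun hg ⟨P, hP⟩
        simp only [Finset.sum_apply, Pi.smul_apply, smul_eq_mul,
          LinearMap.funLeft_apply, Pi.zero_apply] at h1 ⊢
        exact h1
      · have hPz : ∀ c ∈ C', c P = 0 := by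
          simp only [codeSupp, Finset.mem_filter, Finset.mem_univ, true_and] at hP
          push_neg at hP
          exact hP
        rw [Finset.sum_apply, Pi.zero_apply]
        refine Finset.sum_eq_zero (fun β _ => ?_)
        rw [Pi.smul_apply, smul_eq_mul]
        have hz : v β P = 0 := by
          show mV A _ P * cw β P = 0
          rw [hPz (cw β) (hcw β).1, mul_zero]
        rw [hz, mul_zero]
    exact Fintype.linearIndependent_iff.mp hli g hvsum
  have hcardle := hliψ.fintype_card_le_finrank
  rwa [Module.finrank_pi, Fintype.card_coe, Fintype.card_coe] at hcardle


lemma nabla_subset_BX (N : Set (Fin m → ℕ)) : nablaX A N ⊆ BX A := by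
  intro b hb
  simp only [nablaX, Finset.mem_filter] at hb
  exact hb.1

lemma delta_subset_BX (N : Set (Fin m → ℕ)) : deltaX A N ⊆ BX A := by
  intro b hb
  simp only [deltaX, Finset.mem_filter] at hb
  exact hb.1

lemma nabla_delta_split (N : Set (Fin m → ℕ)) :
    (nablaX A N).card + (deltaX A N).card = ∏ i, (A i).card := by
  classical
  have hnabmem : ∀ b, b ∈ nablaX A N ↔ (b ∈ BX A ∧ ∃ a ∈ N, ∀ i, a i ≤ b i) := by
    intro b; simp only [nablaX, Finset.mem_filter]
  have hdelmem : ∀ b, b ∈ deltaX A N ↔ (b ∈ BX A ∧ ¬ ∃ a ∈ N, ∀ i, a i ≤ b i) := by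
    intro b; simp only [deltaX, Finset.mem_filter]
  have hdel : deltaX A N = BX A \ nablaX A N := by
    ext b
    rw [Finset.mem_sdiff, hdelmem b, hnabmem b]
    constructor
    · rintro ⟨h1, h2⟩
      exact ⟨h1, fun hc => h2 hc.2⟩
    · rintro ⟨h1, h2⟩
      exact ⟨h1, fun he => h2 ⟨h1, he⟩⟩
  have hsub : nablaX A N ⊆ BX A := nabla_subset_BX A N
  rw [hdel, ← card_BX A]
  have := Finset.card_sdiff_add_card_eq_card hsub
  omega

end Dev

/-- For a Cartesian set `X = A_1 × ⋯ × A_m` over `F_q`, `0 ≤ d ≤ m` and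
`1 ≤ r ≤ Σ_{i=0}^{d} C(m,i)`, the `r`-th generalized Hamming weight of the Cartesian
square-free code `C_{≤d}^{X,S}` equals `n_1⋯n_m − max{|Δ_X(N)| : N ⊆ S_{≤d}(m), |N| = r}`,
which also equals `min{|∇_X(N)| : N ⊆ S_{≤d}(m), |N| = r}`. -/
theorem ghw_cartesian_squarefree_leq_d_eq_footprint
    {F : Type*} [Field F] [Fintype F] [DecidableEq F] {m d r : ℕ}
    (A : Fin m → Finset F)
    (hcard : ∀ i, 2 ≤ (A i).card)
    (hmono : ∀ i j : Fin m, i ≤ j → (A i).card ≤ (A j).card)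
    (hdm : d ≤ m) (hr1 : 1 ≤ r)
    (hr2 : r ≤ ∑ i ∈ Finset.range (d + 1), m.choose i) :
    GHW (evalCodeX A (Sle m d)) r =
      (∏ i, (A i).card) -
        sSup {k | ∃ N : Finset (Fin m → ℕ),
          ↑N ⊆ Sle m d ∧ N.card = r ∧ (deltaX A ↑N).card = k} ∧
    GHW (evalCodeX A (Sle m d)) r =
      sInf {k | ∃ N : Finset (Fin m → ℕ),
        ↑N ⊆ Sle m d ∧ N.card = r ∧ (nablaX A ↑N).card = k} := by
  classical
  set Pn := ∏ i, (A i).card with hPn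
  set nabSet := {k | ∃ N : Finset (Fin m → ℕ),
    ↑N ⊆ Sle m d ∧ N.card = r ∧ (nablaX A ↑N).card = k} with hnabSet
  set delSet := {k | ∃ N : Finset (Fin m → ℕ),
    ↑N ⊆ Sle m d ∧ N.card = r ∧ (deltaX A ↑N).card = k} with hdelSet
  set ghwSet := {k | ∃ C' : Submodule F ({P : Fin m → F // ∀ i, P i ∈ A i} → F),
    C' ≤ evalCodeX A (Sle m d) ∧ Module.finrank F C' = r ∧ (codeSupp C').card = k} with hghwSet
  have hG : GHW (evalCodeX A (Sle m d)) r = sInf ghwSet := rfl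
  obtain ⟨N₀, hN₀sle, hN₀card⟩ := exists_N (m := m) (d := d) hr2
  have hnab_ne : nabSet.Nonempty := ⟨(nablaX A ↑N₀).card, N₀, hN₀sle, hN₀card, rfl⟩
  obtain ⟨N₁, hN₁sle, hN₁card, hN₁nab⟩ := Nat.sInf_mem hnab_ne
  obtain ⟨C₁, hC₁le, hC₁rk, hC₁supp⟩ := ub_exists A hcard N₁ hN₁sle
  have hghw_mem : (codeSupp C₁).card ∈ ghwSet :=
    ⟨C₁, hC₁le, by rw [hC₁rk, hN₁card], rfl⟩
  have hghw_le : GHW (evalCodeX A (Sle m d)) r ≤ sInf nabSet := by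
    rw [hG]
    refine le_trans (Nat.sInf_le hghw_mem) ?_
    rw [← hN₁nab]
    exact hC₁supp
  have hghw_ge : sInf nabSet ≤ GHW (evalCodeX A (Sle m d)) r := by
    rw [hG]
    obtain ⟨C₂, hC₂le, hC₂rk, hC₂supp⟩ := Nat.sInf_mem (Set.nonempty_of_mem hghw_mem)
    obtain ⟨N₂, hN₂sle, hN₂card, hN₂nab⟩ := lb_exists A hcard C₂ hC₂le
    have h1 : sInf nabSet ≤ (nablaX A ↑N₂).card :=
      Nat.sInf_le ⟨N₂, hN₂sle, by rw [hN₂card, hC₂rk], rfl⟩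
    exact h1.trans (hN₂nab.trans (le_of_eq hC₂supp))
  have hmain : GHW (evalCodeX A (Sle m d)) r = sInf nabSet :=
    le_antisymm hghw_le hghw_ge
  refine ⟨?_, hmain⟩
  have hcmin_le : sInf nabSet ≤ Pn := by
    rw [← hN₁nab, hPn, ← card_BX A]
    exact Finset.card_le_card (nabla_subset_BX A _)
  have hbdd : BddAbove delSet := by
    refine ⟨Pn, fun k hk => ?_⟩
    obtain ⟨N, _, _, hNk⟩ := hk
    rw [← hNk, hPn, ← card_BX A]
    exact Finset.card_le_card (delta_subset_BX A _)
  have hdel_ne : delSet.Nonempty := ⟨(deltaX A ↑N₁).card, N₁, hN₁sle, hN₁card, rfl⟩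
  have hsup_le : sSup delSet ≤ Pn - sInf nabSet := by
    refine csSup_le hdel_ne (fun k hk => ?_)
    obtain ⟨N, hNsle, hNcard, hNk⟩ := hk
    have h1 := nabla_delta_split A ↑N
    have h2 : sInf nabSet ≤ (nablaX A ↑N).card :=
      Nat.sInf_le ⟨N, hNsle, hNcard, rfl⟩
    omega
  have hle_sup : Pn - sInf nabSet ≤ sSup delSet := by
    refine le_csSup hbdd ?_
    have h1 := nabla_delta_split A ↑N₁
    exact ⟨N₁, hN₁sle, hN₁card, by omega⟩
  rw [hmain]
  omega
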